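/- If a formal power series y ∈ ℂ[[x]] with y(0) = 0 satisfies x·y'·(1 - r·y) = r·y (equivalently y'/y - r·y' = r/x after clearing denominators), and the coefficient of x^d in y vanishes for 1 ≤ d < r while the coefficient of x^r equals 1, then x^r = y·e^{-r·y} as formal power series. -/

import Mathlib

open PowerSeries

/-- Formal composition `f ∘ g` of power series, valid when `g` has zero
constant term. -/
noncomputable def psComp (f g : PowerSeries ℂ) : PowerSeries ℂ :=
  PowerSeries.mk fun n =>
    PowerSeries.coeff n (∑ k ∈ Finset.range (n + 1), PowerSeries.coeff k f • g ^ k)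

open Finset in
lemma aux_coeff_pow {u : PowerSeries ℂ} (hu : constantCoeff u = 0) {k n : ℕ} (h : n < k) :
    coeff n (u ^ k) = 0 := by
  have hd : (X : PowerSeries ℂ) ^ k ∣ u ^ k :=
    pow_dvd_pow_of_dvd (X_dvd_iff.mpr hu) k
  exact (X_pow_dvd_iff.mp hd) n h

noncomputable def expS (u : PowerSeries ℂ) (m : ℕ) : PowerSeries ℂ :=
  ∑ k ∈ Finset.range m, coeff k (exp ℂ) • u ^ k

lemma coeff_psComp_exp (u : PowerSeries ℂ) (n : ℕ) :
    coeff n (psComp (exp ℂ) u) = coeff n (expS u (n + 1)) := by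
  simp [psComp, expS, coeff_mk]

lemma coeff_expS_stab {u : PowerSeries ℂ} (hu : constantCoeff u = 0) {n m : ℕ} (h : n < m) :
    coeff n (expS u m) = coeff n (psComp (exp ℂ) u) := by
  rw [coeff_psComp_exp, expS, expS, map_sum, map_sum]
  symm
  apply Finset.sum_subset
  · exact Finset.range_subset_range.mpr h
  · intro k _ hk
    rw [Finset.mem_range, not_lt] at hk
    rw [map_smul, aux_coeff_pow hu (Nat.lt_of_succ_le hk), smul_zero]

lemma constCoeff_psComp_exp (u : PowerSeries ℂ) :
    constantCoeff (psComp (exp ℂ) u) = 1 := by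
  rw [← coeff_zero_eq_constantCoeff_apply, coeff_psComp_exp]
  simp [expS]

lemma deriv_expS (u : PowerSeries ℂ) (m : ℕ) :
    derivativeFun (expS u (m + 1)) = derivativeFun u * expS u m := by
  have hder : derivativeFun (expS u (m+1)) = d⁄dX ℂ (expS u (m+1)) := rfl
  rw [hder, expS, map_sum, Finset.sum_range_succ']
  have h0 : d⁄dX ℂ (coeff 0 (exp ℂ) • u ^ 0) = 0 := by
    rw [Derivation.map_smul, pow_zero, Derivation.map_one_eq_zero, smul_zero]
  rw [h0, add_zero, expS, Finset.mul_sum]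
  apply Finset.sum_congr rfl
  intro k _
  rw [Derivation.map_smul, Derivation.leibniz_pow]
  have hq : ((1:ℚ)/(Nat.factorial (k+1))) * ((k:ℚ)+1) = 1 / Nat.factorial k := by
    rw [Nat.factorial_succ]
    have h1 : ((k:ℚ)+1) ≠ 0 := by positivity
    have h2 : ((Nat.factorial k : ℚ)) ≠ 0 := by
      exact_mod_cast Nat.factorial_ne_zero k
    field_simp
    push_cast; ring
  have key : (C (coeff (k+1) (exp ℂ))) * (((k+1 : ℕ)) : PowerSeries ℂ)
      = C (coeff k (exp ℂ)) := by
    rw [show (((k+1 : ℕ)) : PowerSeries ℂ) = C (((k+1 : ℕ)) : ℂ) from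
      (map_natCast (C (R := ℂ)) _).symm, ← map_mul]
    congr 1
    rw [coeff_exp, coeff_exp, show (((k+1:ℕ)):ℂ) = algebraMap ℚ ℂ ((k:ℚ)+1) by
      push_cast; simp, ← map_mul, hq]
  rw [smul_eq_C_mul, smul_eq_C_mul, nsmul_eq_mul, smul_eq_mul, Nat.add_sub_cancel]
  have hd : d⁄dX ℂ u = derivativeFun u := rfl
  rw [hd]
  have : Nat.succ k = k + 1 := rfl
  linear_combination (u^k * derivativeFun u) * key

lemma coeff_derivativeFun (f : PowerSeries ℂ) (n : ℕ) :
    coeff n (derivativeFun f) = coeff (n + 1) f * (n + 1) :=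
  coeff_derivative f n

lemma deriv_psComp_exp {u : PowerSeries ℂ} (hu : constantCoeff u = 0) :
    derivativeFun (psComp (exp ℂ) u) = derivativeFun u * psComp (exp ℂ) u := by
  ext n
  rw [coeff_derivativeFun, ← coeff_expS_stab hu (Nat.lt_succ_self (n+1)),
    ← coeff_derivativeFun, deriv_expS, coeff_mul, coeff_mul]
  apply Finset.sum_congr rfl
  intro p hp
  rw [Finset.HasAntidiagonal.mem_antidiagonal] at hp
  rw [coeff_expS_stab hu (Nat.lt_succ_of_le (le_of_add_le_right hp.le))]


/-- If `y ∈ ℂ[[x]]` with `y(0) = 0` satisfies the (0,1) edge-contraction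
equation `x y' - r x y y' = r y`, its coefficients vanish in degrees
`1 ≤ d < r`, and its `x^r`-coefficient is `1`, then `x^r = y e^(-r y)`. -/
theorem r_lambert_from_ECF (r : ℕ) (hr : 0 < r) (y : PowerSeries ℂ)
    (hy0 : PowerSeries.constantCoeff y = 0)
    (hODE : PowerSeries.X * PowerSeries.derivativeFun y -
        (r : PowerSeries ℂ) * PowerSeries.X * y * PowerSeries.derivativeFun y =
        (r : PowerSeries ℂ) * y)
    (hvanish : ∀ d, 1 ≤ d → d < r → PowerSeries.coeff d y = 0)
    (hr_coeff : PowerSeries.coeff r y = 1) :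
    PowerSeries.X ^ r = y * psComp (PowerSeries.exp ℂ) (-((r : PowerSeries ℂ) * y)) := by
  set u : PowerSeries ℂ := -((r : PowerSeries ℂ) * y) with hu_def
  have hu0 : constantCoeff u = 0 := by
    simp [hu_def, hy0]
  set E := psComp (exp ℂ) u with hE_def
  set F := y * E with hF_def
  -- derivative of u
  have hu' : derivativeFun u = -((r : PowerSeries ℂ) * derivativeFun y) := by
    have : derivativeFun u = d⁄dX ℂ u := rfl
    rw [this, hu_def, map_neg, Derivation.leibniz]
    have hc : d⁄dX ℂ ((r : PowerSeries ℂ)) = 0 := by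
      rw [show ((r : ℕ) : PowerSeries ℂ) = C ((r:ℕ) : ℂ) from (map_natCast (C (R := ℂ)) _).symm]
      exact derivative_C
    rw [hc, smul_zero, add_zero, smul_eq_mul]
    rfl
  -- the ODE for F
  have hF' : X * derivativeFun F = (r : PowerSeries ℂ) * F := by
    rw [hF_def, derivativeFun_mul, deriv_psComp_exp hu0, hu', smul_eq_mul, smul_eq_mul]
    rw [← hE_def]
    have : X * (y * (-((r : PowerSeries ℂ) * derivativeFun y) * E) + E * derivativeFun y)
        = (X * derivativeFun y - (r : PowerSeries ℂ) * X * y * derivativeFun y) * E := by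
      ring
    rw [this, hODE]
    ring
  -- coefficient-wise consequence
  have hcoeff : ∀ n : ℕ, (n : ℂ) * coeff n F = (r : ℂ) * coeff n F := by
    intro n
    have h := congrArg (coeff n) hF'
    have hrhs : coeff n ((r : PowerSeries ℂ) * F) = (r : ℂ) * coeff n F := by
      rw [show ((r : ℕ) : PowerSeries ℂ) = C ((r:ℕ) : ℂ) from (map_natCast (C (R := ℂ)) _).symm,
        coeff_C_mul]
    cases n with
    | zero =>
      simp only [Nat.cast_zero, zero_mul]
      rw [hrhs] at h
      rw [← h, coeff_zero_eq_constantCoeff_apply, map_mul, constantCoeff_X, zero_mul]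
    | succ m =>
      rw [hrhs, coeff_succ_X_mul, coeff_derivativeFun] at h
      rw [← h]
      push_cast
      ring
  have hFn : ∀ n : ℕ, n ≠ r → coeff n F = 0 := by
    intro n hn
    have h := hcoeff n
    have : ((n : ℂ) - (r : ℂ)) * coeff n F = 0 := by linear_combination h
    rcases mul_eq_zero.mp this with h' | h'
    · exact absurd (by exact_mod_cast sub_eq_zero.mp h') hn
    · exact h'
  have hFr : coeff r F = 1 := by
    rw [hF_def, coeff_mul]
    rw [Finset.sum_eq_single (r, 0)]
    · rw [coeff_zero_eq_constantCoeff_apply, hE_def, constCoeff_psComp_exp, hr_coeff, mul_one]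
    · intro p hp hne
      rw [Finset.HasAntidiagonal.mem_antidiagonal] at hp
      have h1 : p.1 < r := by
        rcases lt_or_eq_of_le (Nat.le.intro hp) with h | h
        · exact h
        · exfalso; apply hne
          have : p.2 = 0 := by omega
          exact Prod.ext h this
      rcases Nat.eq_zero_or_pos p.1 with h0 | h0
      · rw [h0, coeff_zero_eq_constantCoeff_apply, hy0, zero_mul]
      · rw [hvanish p.1 h0 h1, zero_mul]
    · intro h
      exact absurd (Finset.HasAntidiagonal.mem_antidiagonal.mpr (by simp)) h
  ext n
  rw [coeff_X_pow]
  by_cases hn : n = r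
  · rw [if_pos hn, hn, hFr]
  · rw [if_neg hn, hFn n hn]
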